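/- arXiv:1204.4419 — 8 statements merged into one kernel-verified Lean document; each statement's English description precedes it below -/
import Mathlib

section
/- Let g,b>0, |V1|,|V2|>0, and suppose −arctan(b/g) < θ̲ ≤ θ̄ < arctan(b/g). Define P(θ) = (|V1|²g + |V1||V2|(b sin θ − g cos θ), |V2|²g − |V1||V2|(b sin θ + g cos θ)) and the arc 𝒫 = {P(θ) : θ ∈ [θ̲, θ̄]}. Then every point of 𝒫 is Pareto-optimal in 𝒫: for θ, θ' ∈ [θ̲,θ̄] with θ ≠ θ', neither P(θ) ≤ P(θ') componentwise nor P(θ') ≤ P(θ) componentwise. -/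
open Real

theorem two_bus_arc_all_pareto
    (g b V1 V2 θlo θhi : ℝ) (hg : 0 < g) (hb : 0 < b) (hV1 : 0 < V1) (hV2 : 0 < V2)
    (hlo : -Real.arctan (b / g) < θlo) (hle : θlo ≤ θhi)
    (hhi : θhi < Real.arctan (b / g))
    (P : ℝ → ℝ × ℝ)
    (hP : ∀ θ, P θ = (V1 ^ 2 * g + V1 * V2 * (b * Real.sin θ - g * Real.cos θ),
                      V2 ^ 2 * g - V1 * V2 * (b * Real.sin θ + g * Real.cos θ))) :
    ∀ θ ∈ Set.Icc θlo θhi, ∀ θ' ∈ Set.Icc θlo θhi, θ ≠ θ' →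
      ¬ (P θ ≤ P θ') ∧ ¬ (P θ' ≤ P θ) := by
  set A := Real.arctan (b / g) with hA
  have hAlt : A < π / 2 := Real.arctan_lt_pi_div_two _
  have hAgt : -(π/2) < -A := by linarith
  -- key sign facts on Icc
  have hmem : ∀ θ ∈ Set.Icc θlo θhi, -A < θ ∧ θ < A := by
    intro θ hθ
    exact ⟨lt_of_lt_of_le hlo hθ.1, lt_of_le_of_lt hθ.2 hhi⟩
  have hsign : ∀ θ ∈ Set.Icc θlo θhi,
      0 < b * Real.cos θ + g * Real.sin θ ∧ 0 < b * Real.cos θ - g * Real.sin θ := by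
    intro θ hθ
    obtain ⟨h1, h2⟩ := hmem θ hθ
    have hθlo' : -(π/2) < θ := lt_trans hAgt h1
    have hθhi' : θ < π/2 := lt_trans h2 hAlt
    have hcos : 0 < Real.cos θ := Real.cos_pos_of_mem_Ioo ⟨hθlo', hθhi'⟩
    have htanA : Real.tan A = b / g := Real.tan_arctan _
    have ht1 : Real.tan θ < b / g := by
      rw [← htanA]
      exact Real.tan_lt_tan_of_lt_of_lt_pi_div_two hθlo' hAlt h2
    have ht2 : -(b / g) < Real.tan θ := by
      have : Real.tan (-A) < Real.tan θ := by
        apply Real.tan_lt_tan_of_lt_of_lt_pi_div_two hAgt hθhi' h1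
      rwa [Real.tan_neg, htanA] at this
    have hsin : Real.sin θ = Real.tan θ * Real.cos θ := by
      rw [Real.tan_eq_sin_div_cos]
      field_simp
    constructor
    · rw [hsin]
      have : -(b) < g * Real.tan θ := by
        have h' : -b / g < Real.tan θ := by rw [neg_div]; exact ht2
        have := (div_lt_iff₀ hg).mp h'
        nlinarith
      nlinarith
    · rw [hsin]
      have : g * Real.tan θ < b := by
        have := (lt_div_iff₀ hg).mp ht1
        nlinarith
      nlinarith
  -- strict monotonicity of the two coordinate drivers
  have hmono1 : StrictMonoOn (fun θ => b * Real.sin θ - g * Real.cos θ) (Set.Icc θlo θhi) := by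
    apply strictMonoOn_of_deriv_pos (convex_Icc _ _)
    · exact (Continuous.sub (continuous_const.mul Real.continuous_sin)
        (continuous_const.mul Real.continuous_cos)).continuousOn
    · intro θ hθ
      rw [interior_Icc] at hθ
      have hθ' : θ ∈ Set.Icc θlo θhi := ⟨le_of_lt hθ.1, le_of_lt hθ.2⟩
      have hd : deriv (fun θ => b * Real.sin θ - g * Real.cos θ) θ
          = b * Real.cos θ + g * Real.sin θ := by
        have : HasDerivAt (fun θ => b * Real.sin θ - g * Real.cos θ)
            (b * Real.cos θ - g * (-Real.sin θ)) θ :=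
          ((Real.hasDerivAt_sin θ).const_mul b).sub ((Real.hasDerivAt_cos θ).const_mul g)
        rw [this.deriv]; ring
      rw [hd]
      exact (hsign θ hθ').1
  have hmono2 : StrictMonoOn (fun θ => b * Real.sin θ + g * Real.cos θ) (Set.Icc θlo θhi) := by
    apply strictMonoOn_of_deriv_pos (convex_Icc _ _)
    · exact (Continuous.add (continuous_const.mul Real.continuous_sin)
        (continuous_const.mul Real.continuous_cos)).continuousOn
    · intro θ hθ
      rw [interior_Icc] at hθ
      have hθ' : θ ∈ Set.Icc θlo θhi := ⟨le_of_lt hθ.1, le_of_lt hθ.2⟩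
      have hd : deriv (fun θ => b * Real.sin θ + g * Real.cos θ) θ
          = b * Real.cos θ - g * Real.sin θ := by
        have : HasDerivAt (fun θ => b * Real.sin θ + g * Real.cos θ)
            (b * Real.cos θ + g * (-Real.sin θ)) θ :=
          ((Real.hasDerivAt_sin θ).const_mul b).add ((Real.hasDerivAt_cos θ).const_mul g)
        rw [this.deriv]; ring
      rw [hd]
      exact (hsign θ hθ').2
  have hV12 : 0 < V1 * V2 := mul_pos hV1 hV2
  -- main argument
  have key : ∀ θ ∈ Set.Icc θlo θhi, ∀ θ' ∈ Set.Icc θlo θhi, θ < θ' →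
      ¬ (P θ ≤ P θ') ∧ ¬ (P θ' ≤ P θ) := by
    intro θ hθ θ' hθ' hlt
    have h1 : (P θ).1 < (P θ').1 := by
      rw [hP, hP]; dsimp only
      have h : b * Real.sin θ - g * Real.cos θ < b * Real.sin θ' - g * Real.cos θ' :=
        hmono1 hθ hθ' hlt
      nlinarith [h]
    have h2 : (P θ').2 < (P θ).2 := by
      rw [hP, hP]; dsimp only
      have h : b * Real.sin θ + g * Real.cos θ < b * Real.sin θ' + g * Real.cos θ' :=
        hmono2 hθ hθ' hlt
      nlinarith [h]
    constructor
    · intro h; exact absurd h.2 (not_le.mpr h2)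
    · intro h; exact absurd h.1 (not_le.mpr h1)
  intro θ hθ θ' hθ' hne
  rcases lt_or_gt_of_ne hne with h | h
  · exact key θ hθ θ' hθ' h
  · exact (key θ' hθ' θ hθ h).symm
end

section
/- With the setup of the two-bus arc 𝒫 = {P(θ) : θ ∈ [θ̲, θ̄]} where −arctan(b/g) < θ̲ ≤ θ̄ < arctan(b/g), the Pareto front of 𝒫 equals the Pareto front of conv(𝒫): 𝒪(𝒫) = 𝒪(conv(𝒫)). -/
open Real

/-- The Pareto front of a set: points not dominated (componentwise) by any other point. -/
def paretoFront {α : Type*} [Preorder α] (S : Set α) : Set α :=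
  {x ∈ S | ∀ y ∈ S, y ≤ x → y = x}

/-- Positivity of the supporting-functional coefficient. -/
lemma two_bus_aux_pos (g b θ : ℝ) (hg : 0 < g) (hb : 0 < b)
    (h1 : -Real.arctan (b / g) < θ) (h2 : θ < Real.arctan (b / g)) :
    0 < b * Real.cos θ - g * Real.sin θ := by
  have hpi : Real.arctan (b / g) < π / 2 := Real.arctan_lt_pi_div_two _
  have hc : 0 < Real.cos θ := Real.cos_pos_of_mem_Ioo ⟨by linarith, by linarith⟩
  have htan : Real.tan θ < Real.tan (Real.arctan (b / g)) :=
    Real.tan_lt_tan_of_lt_of_lt_pi_div_two (by linarith) hpi h2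
  rw [Real.tan_arctan, Real.tan_eq_sin_div_cos, div_lt_div_iff₀ hc hg] at htan
  linarith

/-- The key supporting-line inequality (pure trig identity). -/
lemma two_bus_aux_key (g b V1 V2 θ φ : ℝ) (hg : 0 < g) (hb : 0 < b)
    (hV1 : 0 < V1) (hV2 : 0 < V2) :
    (b * Real.cos θ - g * Real.sin θ) * (V1 ^ 2 * g + V1 * V2 * (b * Real.sin θ - g * Real.cos θ))
      + (b * Real.cos θ + g * Real.sin θ) *
          (V2 ^ 2 * g - V1 * V2 * (b * Real.sin θ + g * Real.cos θ))
    ≤ (b * Real.cos θ - g * Real.sin θ) *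
          (V1 ^ 2 * g + V1 * V2 * (b * Real.sin φ - g * Real.cos φ))
      + (b * Real.cos θ + g * Real.sin θ) *
          (V2 ^ 2 * g - V1 * V2 * (b * Real.sin φ + g * Real.cos φ)) := by
  have hdiff :
      ((b * Real.cos θ - g * Real.sin θ) *
          (V1 ^ 2 * g + V1 * V2 * (b * Real.sin φ - g * Real.cos φ))
        + (b * Real.cos θ + g * Real.sin θ) *
            (V2 ^ 2 * g - V1 * V2 * (b * Real.sin φ + g * Real.cos φ)))
      - ((b * Real.cos θ - g * Real.sin θ) *
          (V1 ^ 2 * g + V1 * V2 * (b * Real.sin θ - g * Real.cos θ))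
        + (b * Real.cos θ + g * Real.sin θ) *
            (V2 ^ 2 * g - V1 * V2 * (b * Real.sin θ + g * Real.cos θ)))
      = 2 * b * g * V1 * V2 * (1 - Real.cos (φ - θ)) := by
    rw [Real.cos_sub]
    linear_combination (2 * b * g * V1 * V2) * Real.sin_sq_add_cos_sq θ
  have h1 : Real.cos (φ - θ) ≤ 1 := Real.cos_le_one _
  have h2 : 0 ≤ 2 * b * g * V1 * V2 * (1 - Real.cos (φ - θ)) :=
    mul_nonneg (by positivity) (by linarith)
  linarith [hdiff, h2]

/-- A convex combination lies between its endpoints. -/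
lemma two_bus_aux_between (a b t t' : ℝ) (h : a ≤ b) (ht : 0 ≤ t) (ht' : 0 ≤ t')
    (htt : t + t' = 1) : a ≤ t * a + t' * b ∧ t * a + t' * b ≤ b := by
  have h1 := mul_le_mul_of_nonneg_left h ht
  have h2 := mul_le_mul_of_nonneg_left h ht'
  have ht1 : t' = 1 - t := by linarith
  subst ht1
  constructor <;> nlinarith

/-- Linear arithmetic for the convexity step. -/
lemma two_bus_aux_combo (L M x y A1 A2 B1 B2 t t' : ℝ) (hM : 0 < M)
    (k1 : L * x + M * y ≤ L * A1 + M * A2) (k2 : L * x + M * y ≤ L * B1 + M * B2)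
    (ht : 0 ≤ t) (ht' : 0 ≤ t') (htt : t + t' = 1)
    (hx : x = t * A1 + t' * B1) : y ≤ t * A2 + t' * B2 := by
  have h1 := mul_le_mul_of_nonneg_left k1 ht
  have h2 := mul_le_mul_of_nonneg_left k2 ht'
  have e : t * (L * x + M * y) + t' * (L * x + M * y) = L * x + M * y := by
    have ht1 : t' = 1 - t := by linarith
    rw [ht1]; ring
  have h4 : L * x + M * y ≤ t * (L * A1 + M * A2) + t' * (L * B1 + M * B2) := by
    linarith [h1, h2, e]
  have h5 : t * (L * A1 + M * A2) + t' * (L * B1 + M * B2)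
      = L * x + M * (t * A2 + t' * B2) := by rw [hx]; ring
  rw [h5] at h4
  have h6 : M * y ≤ M * (t * A2 + t' * B2) := by linarith
  exact le_of_mul_le_mul_left h6 hM

theorem two_bus_arc_pareto_front_eq_convexHull
    (g b V1 V2 θlo θhi : ℝ) (hg : 0 < g) (hb : 0 < b) (hV1 : 0 < V1) (hV2 : 0 < V2)
    (hlo : -Real.arctan (b / g) < θlo) (hle : θlo ≤ θhi)
    (hhi : θhi < Real.arctan (b / g))
    (P : ℝ → ℝ × ℝ)
    (hP : ∀ θ, P θ = (V1 ^ 2 * g + V1 * V2 * (b * Real.sin θ - g * Real.cos θ),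
                      V2 ^ 2 * g - V1 * V2 * (b * Real.sin θ + g * Real.cos θ))) :
    paretoFront (P '' Set.Icc θlo θhi) =
      paretoFront (convexHull ℝ (P '' Set.Icc θlo θhi)) := by
  set S : Set (ℝ × ℝ) := P '' Set.Icc θlo θhi with hS
  have hpos1 : ∀ θ ∈ Set.Icc θlo θhi, 0 < b * Real.cos θ - g * Real.sin θ := by
    intro θ hθ
    exact two_bus_aux_pos g b θ hg hb (by linarith [hθ.1]) (by linarith [hθ.2])
  have hpos2 : ∀ θ ∈ Set.Icc θlo θhi, 0 < b * Real.cos θ + g * Real.sin θ := by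
    intro θ hθ
    have := two_bus_aux_pos g b (-θ) hg hb (by linarith [hθ.2]) (by linarith [hθ.1])
    rw [Real.cos_neg, Real.sin_neg] at this
    linarith
  have hkey : ∀ θ ∈ Set.Icc θlo θhi, ∀ φ ∈ Set.Icc θlo θhi,
      (b * Real.cos θ - g * Real.sin θ) * (P θ).1 + (b * Real.cos θ + g * Real.sin θ) * (P θ).2
      ≤ (b * Real.cos θ - g * Real.sin θ) * (P φ).1
        + (b * Real.cos θ + g * Real.sin θ) * (P φ).2 := by
    intro θ _ φ _
    rw [hP θ, hP φ]
    exact two_bus_aux_key g b V1 V2 θ φ hg hb hV1 hV2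
  have hsupp : ∀ θ ∈ Set.Icc θlo θhi, ∀ q ∈ convexHull ℝ S,
      (b * Real.cos θ - g * Real.sin θ) * (P θ).1 + (b * Real.cos θ + g * Real.sin θ) * (P θ).2
      ≤ (b * Real.cos θ - g * Real.sin θ) * q.1 + (b * Real.cos θ + g * Real.sin θ) * q.2 := by
    intro θ hθ
    have hlin : IsLinearMap ℝ fun q : ℝ × ℝ =>
        (b * Real.cos θ - g * Real.sin θ) * q.1 + (b * Real.cos θ + g * Real.sin θ) * q.2 := by
      constructor
      · intro x y; simp [Prod.fst_add, Prod.snd_add]; ring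
      · intro c x; simp [Prod.smul_fst, Prod.smul_snd, smul_eq_mul]; ring
    have hsub : convexHull ℝ S ⊆
        {q : ℝ × ℝ | (b * Real.cos θ - g * Real.sin θ) * (P θ).1
            + (b * Real.cos θ + g * Real.sin θ) * (P θ).2
          ≤ (b * Real.cos θ - g * Real.sin θ) * q.1
            + (b * Real.cos θ + g * Real.sin θ) * q.2} := by
      apply convexHull_min
      · rintro _ ⟨φ, hφ, rfl⟩
        exact hkey θ hθ φ hφ
      · exact convex_halfSpace_ge hlin _
    intro q hq
    exact hsub hq
  have hcont : ContinuousOn (fun θ => (P θ).1) (Set.Icc θlo θhi) := by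
    have : (fun θ => (P θ).1) =
        fun θ => V1 ^ 2 * g + V1 * V2 * (b * Real.sin θ - g * Real.cos θ) := by
      funext θ; rw [hP θ]
    rw [this]
    fun_prop
  have hdom : ∀ q ∈ convexHull ℝ S, ∃ θ ∈ Set.Icc θlo θhi, P θ ≤ q := by
    have hsub : convexHull ℝ S ⊆ {q : ℝ × ℝ | ∃ θ ∈ Set.Icc θlo θhi, P θ ≤ q} := by
      apply convexHull_min
      · rintro _ ⟨θ, hθ, rfl⟩
        exact ⟨θ, hθ, le_refl _⟩
      · rintro q ⟨θ, hθ, hPq⟩ q' ⟨θ', hθ', hPq'⟩ t t' ht ht' htt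
        have huIcc : Set.uIcc θ θ' ⊆ Set.Icc θlo θhi := by
          intro ψ hψ
          rcases Set.mem_uIcc.mp hψ with ⟨h1, h2⟩ | ⟨h1, h2⟩
          · exact ⟨le_trans hθ.1 h1, le_trans h2 hθ'.2⟩
          · exact ⟨le_trans hθ'.1 h1, le_trans h2 hθ.2⟩
        have hmid : t * (P θ).1 + t' * (P θ').1 ∈ Set.uIcc ((P θ).1) ((P θ').1) := by
          rcases le_total ((P θ).1) ((P θ').1) with h | h
          · exact Set.mem_uIcc.mpr (Or.inl (two_bus_aux_between _ _ t t' h ht ht' htt))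
          · have h2 := two_bus_aux_between _ _ t' t h ht' ht (by linarith)
            exact Set.mem_uIcc.mpr (Or.inr ⟨by linarith [h2.1], by linarith [h2.2]⟩)
        obtain ⟨ψ, hψu, hψ1⟩ := intermediate_value_uIcc (hcont.mono huIcc) hmid
        have hψ1' : (P ψ).1 = t * (P θ).1 + t' * (P θ').1 := hψ1
        have hψ : ψ ∈ Set.Icc θlo θhi := huIcc hψu
        refine ⟨ψ, hψ, ?_⟩
        have k1 := hkey ψ hψ θ hθ
        have k2 := hkey ψ hψ θ' hθ'
        have hl2 := hpos2 ψ hψ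
        have hψ2 : (P ψ).2 ≤ t * (P θ).2 + t' * (P θ').2 :=
          two_bus_aux_combo _ _ _ _ _ _ _ _ t t' hl2 k1 k2 ht ht' htt hψ1'
        have hq1 : (P θ).1 ≤ q.1 := (Prod.le_def.mp hPq).1
        have hq2 : (P θ).2 ≤ q.2 := (Prod.le_def.mp hPq).2
        have hq1' : (P θ').1 ≤ q'.1 := (Prod.le_def.mp hPq').1
        have hq2' : (P θ').2 ≤ q'.2 := (Prod.le_def.mp hPq').2
        have hm1 := mul_le_mul_of_nonneg_left hq1 ht
        have hm2 := mul_le_mul_of_nonneg_left hq2 ht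
        have hm1' := mul_le_mul_of_nonneg_left hq1' ht'
        have hm2' := mul_le_mul_of_nonneg_left hq2' ht'
        rw [Prod.le_def]
        constructor
        · have e : (t • q + t' • q').1 = t * q.1 + t' * q'.1 := by simp [smul_eq_mul]
          rw [e, hψ1']
          linarith
        · have e : (t • q + t' • q').2 = t * q.2 + t' * q'.2 := by simp [smul_eq_mul]
          rw [e]
          linarith
    exact fun q hq => hsub hq
  ext x
  simp only [paretoFront, Set.mem_setOf_eq, Set.mem_sep_iff]
  constructor
  · rintro ⟨hxS, _⟩
    refine ⟨subset_convexHull ℝ _ hxS, ?_⟩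
    intro y hy hyx
    obtain ⟨θ, hθ, rfl⟩ := hxS
    have h := hsupp θ hθ y hy
    have hy1 : y.1 ≤ (P θ).1 := (Prod.le_def.mp hyx).1
    have hy2 : y.2 ≤ (P θ).2 := (Prod.le_def.mp hyx).2
    have hl1 := hpos1 θ hθ
    have hl2 := hpos2 θ hθ
    have e1 : (P θ).1 ≤ y.1 := by
      nlinarith [mul_nonneg hl2.le (sub_nonneg.mpr hy2), h, hl1]
    have e2 : (P θ).2 ≤ y.2 := by
      nlinarith [mul_nonneg hl1.le (sub_nonneg.mpr hy1), h, hl2]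
    exact Prod.ext (le_antisymm hy1 e1) (le_antisymm hy2 e2)
  · rintro ⟨hxC, hxp⟩
    obtain ⟨θ, hθ, hPx⟩ := hdom x hxC
    have hx : P θ = x := hxp (P θ) (subset_convexHull ℝ _ ⟨θ, hθ, rfl⟩) hPx
    refine ⟨hx ▸ ⟨θ, hθ, rfl⟩, ?_⟩
    intro y hy hyx
    exact hxp y (subset_convexHull ℝ _ hy) hyx
end

section
/- The map θ ↦ P(θ) = (P1(θ), P2(θ)) restricted to the interval (−arctan(b/g), arctan(b/g)) is injective. Consequently, given fixed voltage magnitudes, the power flows on a two-bus line uniquely determine the angle difference under the practical angle assumption. -/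
open Real

theorem two_bus_flow_map_injective
    (g b V1 V2 : ℝ) (hg : 0 < g) (hb : 0 < b) (hV1 : 0 < V1) (hV2 : 0 < V2) :
    Set.InjOn
      (fun θ => ((V1 ^ 2 * g + V1 * V2 * (b * Real.sin θ - g * Real.cos θ),
                  V2 ^ 2 * g - V1 * V2 * (b * Real.sin θ + g * Real.cos θ)) : ℝ × ℝ))
      (Set.Ioo (-Real.arctan (b / g)) (Real.arctan (b / g))) := by
  intro x hx y hy h
  have h1 := congrArg Prod.fst h
  have h2 := congrArg Prod.snd h
  simp only at h1 h2
  have hV : V1 * V2 ≠ 0 := by positivity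
  have hs : Real.sin x = Real.sin y := by
    have : V1 * V2 * (2 * (b * Real.sin x)) = V1 * V2 * (2 * (b * Real.sin y)) := by
      nlinarith [h1, h2]
    have := mul_left_cancel₀ hV this
    have hb' := hb.ne'
    nlinarith
  have hpi := Real.arctan_lt_pi_div_two (b / g)
  have hsub : Set.Ioo (-Real.arctan (b / g)) (Real.arctan (b / g)) ⊆
      Set.Icc (-(π/2)) (π/2) := by
    intro t ht
    constructor
    · linarith [ht.1]
    · linarith [ht.2]
  exact Real.injOn_sin (hsub hx) (hsub hy) hs
end

section
/- Let A, B ⊆ ℝ² and suppose 𝒪(A) = 𝒪(conv(A)) and 𝒪(B) = 𝒪(conv(B)). Then for the product set A × B ⊆ ℝ⁴ (with the componentwise partial order on ℝ⁴), 𝒪(A × B) = 𝒪(A) × 𝒪(B) and 𝒪(conv(A × B)) = 𝒪(A × B). -/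
lemma paretoFront_prod {α β : Type*} [Preorder α] [Preorder β] (A : Set α) (B : Set β) :
    paretoFront (A ×ˢ B) = paretoFront A ×ˢ paretoFront B := by
  ext ⟨a, b⟩
  constructor
  · rintro ⟨⟨ha, hb⟩, hmin⟩
    refine ⟨⟨ha, fun y hy hle => ?_⟩, ⟨hb, fun y hy hle => ?_⟩⟩
    · have := hmin (y, b) ⟨hy, hb⟩ ⟨hle, le_refl b⟩
      exact congrArg Prod.fst this
    · have := hmin (a, y) ⟨ha, hy⟩ ⟨le_refl a, hle⟩
      exact congrArg Prod.snd this
  · rintro ⟨⟨ha, hamin⟩, ⟨hb, hbmin⟩⟩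
    refine ⟨⟨ha, hb⟩, fun y hy hle => ?_⟩
    exact Prod.ext (hamin y.1 hy.1 hle.1) (hbmin y.2 hy.2 hle.2)

theorem pareto_front_of_product
    (A B : Set (ℝ × ℝ))
    (hA : paretoFront A = paretoFront (convexHull ℝ A))
    (hB : paretoFront B = paretoFront (convexHull ℝ B)) :
    paretoFront (A ×ˢ B) = paretoFront A ×ˢ paretoFront B ∧
    paretoFront (convexHull ℝ (A ×ˢ B)) = paretoFront (A ×ˢ B) := by
  refine ⟨paretoFront_prod A B, ?_⟩
  rw [convexHull_prod, paretoFront_prod, ← hA, ← hB, paretoFront_prod]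
end

section
/- Let F = ∏_{e ∈ E} F_e ⊆ ℝ^{2|E|} be a product of sets F_e ⊆ ℝ², and suppose each F_e satisfies F_e = 𝒪(F_e) = 𝒪(conv(F_e)). Let A be a nonnegative linear map ℝ^{2|E|} → ℝⁿ such that each coordinate of F appears with coefficient exactly 1 in exactly one coordinate of A and 0 elsewhere (an aggregation map). If p ∈ 𝒪(conv(A F)) and f ∈ conv(F) satisfies A f = p, then for each e ∈ E the component f_e ∈ ℝ² lies in 𝒪(conv(F_e)), and hence f ∈ F and p ∈ A F. -/
/-- The aggregation map determined by an assignment `σ` of each flow coordinate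
to a bus: each flow coordinate appears with coefficient 1 in exactly one output
coordinate and 0 elsewhere. -/
noncomputable def aggMap {E : Type*} [Fintype E] (n : ℕ) (σ : E × Fin 2 → Fin n) :
    ((E × Fin 2) → ℝ) →ₗ[ℝ] (Fin n → ℝ) where
  toFun f := fun i => ∑ c : E × Fin 2, if σ c = i then f c else 0
  map_add' f g := by
    funext i; simp only [Pi.add_apply]
    rw [← Finset.sum_add_distrib]
    congr 1; funext c; split <;> ring
  map_smul' r f := by
    funext i; simp only [Pi.smul_apply, RingHom.id_apply, smul_eq_mul,
      Finset.mul_sum]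
    congr 1; funext c; split <;> ring

/-- The linear equivalence regrouping flow coordinates into pairs. -/
noncomputable def pairEquiv (E : Type*) : ((E × Fin 2) → ℝ) ≃ₗ[ℝ] (E → ℝ × ℝ) where
  toFun f := fun e => (f (e, 0), f (e, 1))
  invFun g := fun c => if c.2 = 0 then (g c.1).1 else (g c.1).2
  map_add' f g := rfl
  map_smul' r f := rfl
  left_inv f := by
    funext c
    obtain ⟨e, i⟩ := c
    fin_cases i <;> simp
  right_inv g := by funext e; simp

lemma mem_convexHull_iff_pairs {E : Type*} [Fintype E] (Fe : E → Set (ℝ × ℝ))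
    (F : Set ((E × Fin 2) → ℝ))
    (hF : F = {f | ∀ e : E, (f (e, 0), f (e, 1)) ∈ Fe e})
    (f : (E × Fin 2) → ℝ) :
    f ∈ convexHull ℝ F ↔ ∀ e : E, (f (e, 0), f (e, 1)) ∈ convexHull ℝ (Fe e) := by
  have himg : (pairEquiv E) '' F = Set.univ.pi Fe := by
    ext g
    constructor
    · rintro ⟨h, hh, rfl⟩
      intro e _
      rw [hF] at hh; exact hh e
    · intro hg
      refine ⟨(pairEquiv E).symm g, ?_, (pairEquiv E).apply_symm_apply g⟩
      rw [hF]
      intro e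
      have : ((pairEquiv E) ((pairEquiv E).symm g)) e ∈ Fe e := by
        rw [(pairEquiv E).apply_symm_apply]
        exact hg e (Set.mem_univ e)
      simpa [pairEquiv] using this
  have key : (pairEquiv E) '' (convexHull ℝ F) = Set.univ.pi (fun e => convexHull ℝ (Fe e)) := by
    have hlin : IsLinearMap ℝ (⇑(pairEquiv E)) := ⟨map_add _, map_smul _⟩
    rw [hlin.image_convexHull, himg, convexHull_pi]
  constructor
  · intro hf e
    have : (pairEquiv E) f ∈ Set.univ.pi (fun e => convexHull ℝ (Fe e)) := by
      rw [← key]; exact ⟨f, hf, rfl⟩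
    exact this e (Set.mem_univ e)
  · intro h
    have : (pairEquiv E) f ∈ Set.univ.pi (fun e => convexHull ℝ (Fe e)) := fun e _ => h e
    rw [← key] at this
    obtain ⟨g, hg, hgf⟩ := this
    have := (pairEquiv E).injective hgf
    rwa [← this]

theorem pareto_flows_from_pareto_injection
    {E : Type*} [Fintype E] (n : ℕ) (σ : E × Fin 2 → Fin n)
    (Fe : E → Set (ℝ × ℝ))
    (hFe : ∀ e, Fe e = paretoFront (Fe e) ∧
      paretoFront (Fe e) = paretoFront (convexHull ℝ (Fe e)))
    (F : Set ((E × Fin 2) → ℝ))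
    (hF : F = {f | ∀ e : E, (f (e, 0), f (e, 1)) ∈ Fe e})
    (p : Fin n → ℝ) (f : (E × Fin 2) → ℝ)
    (hp : p ∈ paretoFront (convexHull ℝ (aggMap n σ '' F)))
    (hf : f ∈ convexHull ℝ F) (hAf : aggMap n σ f = p) :
    (∀ e : E, (f (e, 0), f (e, 1)) ∈ paretoFront (convexHull ℝ (Fe e))) ∧
      f ∈ F ∧ p ∈ aggMap n σ '' F := by
  classical
  have hpairs := (mem_convexHull_iff_pairs Fe F hF f).1 hf
  -- main claim
  have main : ∀ e : E, (f (e, 0), f (e, 1)) ∈ paretoFront (convexHull ℝ (Fe e)) := by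
    intro e
    refine ⟨hpairs e, ?_⟩
    rintro ⟨y1, y2⟩ hy hyle
    by_contra hne
    -- build g: replace coordinates at e by y
    set g : (E × Fin 2) → ℝ := fun c =>
      if c = (e, 0) then y1 else if c = (e, 1) then y2 else f c with hgdef
    have hge0 : g (e, 0) = y1 := by simp [hgdef]
    have hge1 : g (e, 1) = y2 := by
      have : ((e, (1 : Fin 2)) : E × Fin 2) ≠ (e, 0) := by simp
      simp [hgdef, this]
    have hgle : ∀ c, g c ≤ f c := by
      intro c
      by_cases h0 : c = (e, 0)
      · subst h0; rw [hge0]; exact hyle.1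
      · by_cases h1 : c = (e, 1)
        · subst h1; rw [hge1]; exact hyle.2
        · simp [hgdef, h0, h1]
    -- strict at some coordinate
    have hstrict : ∃ c0, g c0 < f c0 := by
      rcases lt_or_eq_of_le hyle.1 with h | h
      · exact ⟨(e, 0), by rw [hge0]; exact h⟩
      rcases lt_or_eq_of_le hyle.2 with h' | h'
      · exact ⟨(e, 1), by rw [hge1]; exact h'⟩
      · exact absurd (Prod.ext h h') hne
    obtain ⟨c0, hc0⟩ := hstrict
    -- g ∈ convexHull F
    have hg : g ∈ convexHull ℝ F := by
      rw [mem_convexHull_iff_pairs Fe F hF]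
      intro e'
      by_cases he' : e' = e
      · subst he'; rw [hge0, hge1]; exact hy
      · have h0 : ((e', (0 : Fin 2)) : E × Fin 2) ≠ (e, 0) := by simp [he']
        have h1 : ((e', (0 : Fin 2)) : E × Fin 2) ≠ (e, 1) := by simp [he']
        have h2 : ((e', (1 : Fin 2)) : E × Fin 2) ≠ (e, 0) := by simp [he']
        have h3 : ((e', (1 : Fin 2)) : E × Fin 2) ≠ (e, 1) := by simp [he']
        simp only [hgdef, if_neg h0, if_neg h1, if_neg h2, if_neg h3]
        exact hpairs e'
    -- A g ∈ convexHull (A '' F)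
    have hAg : aggMap n σ g ∈ convexHull ℝ (aggMap n σ '' F) := by
      rw [← (aggMap n σ).image_convexHull]
      exact ⟨g, hg, rfl⟩
    -- A g ≤ p
    have hAgle : aggMap n σ g ≤ p := by
      intro i
      rw [← hAf]
      exact Finset.sum_le_sum fun c _ => by
        split
        · exact hgle c
        · exact le_refl 0
    have := hp.2 _ hAg hAgle
    -- but strict inequality at σ c0
    have hlt : aggMap n σ g (σ c0) < aggMap n σ f (σ c0) := by
      refine Finset.sum_lt_sum (fun c _ => ?_) ⟨c0, Finset.mem_univ c0, ?_⟩
      · split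
        · exact hgle c
        · exact le_refl 0
      · simp only [if_pos rfl]
        exact hc0
    rw [this, hAf] at hlt
    exact lt_irrefl _ hlt
  refine ⟨main, ?_, ?_⟩
  · rw [hF]
    intro e
    have h := main e
    rw [← (hFe e).2, ← (hFe e).1] at h
    exact h
  · refine ⟨f, ?_, hAf⟩
    rw [hF]
    intro e
    have h := main e
    rw [← (hFe e).2, ← (hFe e).1] at h
    exact h
end

section
/- Let T be a tree (as a graph) rooted arbitrarily, with per-edge flow sets F_{ik} ⊆ ℝ² such that for each edge, the first coordinate uniquely determines the point of F_{ik} (i.e., the map P_{ki} ↦ P_{ik} on F_{ik} is a well-defined function). Then for any injection vector p ∈ ℝⁿ achievable by flows (i.e., p = A f for some f with f_e ∈ F_e for all edges e), the flow vector f is unique. -/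
open Finset

theorem tree_power_flow_unique
    (n : ℕ) (G : SimpleGraph (Fin n)) [DecidableRel G.Adj]
    (hconn : G.Connected) (hacyc : G.IsAcyclic)
    (F : Fin n → Fin n → Set (ℝ × ℝ))
    (hdet : ∀ i k, G.Adj i k → ∀ x ∈ F i k, ∀ y ∈ F i k, x.1 = y.1 → x = y)
    (p : Fin n → ℝ) (f f' : Fin n → Fin n → ℝ)
    (hfF : ∀ i k, G.Adj i k → (f i k, f k i) ∈ F i k)
    (hf'F : ∀ i k, G.Adj i k → (f' i k, f' k i) ∈ F i k)
    (hfp : ∀ i, ∑ k ∈ univ.filter (fun k => G.Adj i k), f i k = p i)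
    (hf'p : ∀ i, ∑ k ∈ univ.filter (fun k => G.Adj i k), f' i k = p i) :
    ∀ i k, G.Adj i k → f i k = f' i k := by
  by_contra hcon
  push_neg at hcon
  obtain ⟨i0, k0, hadj0, hne0⟩ := hcon
  -- badness is symmetric thanks to the determination hypothesis
  have hsymm : ∀ i k, G.Adj i k → f i k ≠ f' i k → f k i ≠ f' k i := by
    intro i k h hne heq
    have := hdet k i h.symm (f k i, f i k) (hfF k i h.symm)
      (f' k i, f' i k) (hf'F k i h.symm) heq
    exact hne (congrArg Prod.snd this)
  -- the subgraph of "bad" edges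
  set H : SimpleGraph (Fin n) :=
    { Adj := fun i k => G.Adj i k ∧ f i k ≠ f' i k
      symm := ⟨fun i k h => ⟨h.1.symm, hsymm i k h.1 h.2⟩⟩
      loopless := ⟨fun i h => G.loopless.irrefl i h.1⟩ } with hHdef
  have hle : H ≤ G := by intro v w h; exact h.1
  have hHacyc : H.IsAcyclic := fun v c hc => hacyc (c.mapLe hle) (hc.mapLe hle)
  -- every vertex incident to a bad edge is incident to another bad edge
  have hdeg : ∀ a d, H.Adj a d → ∃ c, H.Adj a c ∧ c ≠ d := by
    rintro a d ⟨hd, hnd⟩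
    by_contra hc
    push_neg at hc
    have hsum : ∑ k ∈ univ.filter (fun k => G.Adj a k), (f a k - f' a k) = 0 := by
      rw [Finset.sum_sub_distrib, hfp a, hf'p a, sub_self]
    have hone : ∑ k ∈ univ.filter (fun k => G.Adj a k), (f a k - f' a k)
        = f a d - f' a d := by
      apply Finset.sum_eq_single_of_mem
      · simp [hd]
      · intro b hb hbd
        have hb' : G.Adj a b := by simpa using hb
        by_contra hnz
        exact hbd (hc b ⟨hb', fun he => hnz (by rw [he, sub_self])⟩)
    rw [hsum] at hone
    exact hnd (by linarith)
  -- take a path in H of maximal length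
  set S : Set ℕ := {m | ∃ a b : Fin n, ∃ q : H.Walk a b, q.IsPath ∧ q.length = m}
    with hSdef
  have hH0 : H.Adj i0 k0 := ⟨hadj0, hne0⟩
  have h1 : 1 ∈ S :=
    ⟨i0, k0, .cons hH0 .nil,
      by simp [SimpleGraph.Walk.cons_isPath_iff, hH0.ne], rfl⟩
  have hbdd : BddAbove S := by
    refine ⟨n, ?_⟩
    rintro m ⟨a, b, q, hq, rfl⟩
    have := hq.length_lt
    simpa using this.le
  obtain ⟨a, b, w, hp, hlen⟩ := Nat.sSup_mem ⟨1, h1⟩ hbdd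
  have hmax : ∀ m ∈ S, m ≤ w.length := fun m hm => hlen ▸ le_csSup hbdd hm
  have h1le : 1 ≤ w.length := by
    rw [hlen]; exact le_csSup hbdd h1
  cases w with
  | nil => simp at h1le
  | @cons _ d _ hd q =>
    obtain ⟨c, hac, hcd⟩ := hdeg a d hd
    by_cases hcs : c ∈ (SimpleGraph.Walk.cons hd q).support
    · -- c on the path: get two distinct H-paths from a to c, contradicting acyclicity
      have hcq : c ∈ q.support := by
        rcases (SimpleGraph.Walk.mem_support_iff _).mp hcs with h | h
        · exact absurd h.symm hac.ne
        · exact h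
      obtain ⟨q1, q2, rfl⟩ := SimpleGraph.Walk.mem_support_iff_exists_append.mp hcq
      have hp1 : (SimpleGraph.Walk.cons hd q1).IsPath := by
        have : ((SimpleGraph.Walk.cons hd q1).append q2).IsPath := by
          rwa [SimpleGraph.Walk.cons_append]
        exact this.of_append_left
      have hp2 : (SimpleGraph.Walk.cons hac SimpleGraph.Walk.nil).IsPath := by
        simp [SimpleGraph.Walk.cons_isPath_iff, hac.ne]
      have heq := hHacyc.path_unique ⟨_, hp1⟩ ⟨_, hp2⟩
      have hdm : d ∈ (SimpleGraph.Walk.cons hd q1).support := by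
        simp [SimpleGraph.Walk.support_cons]
      have heq' : SimpleGraph.Walk.cons hd q1
          = SimpleGraph.Walk.cons hac SimpleGraph.Walk.nil :=
        congrArg Subtype.val heq
      rw [heq'] at hdm
      simp only [SimpleGraph.Walk.support_cons, SimpleGraph.Walk.support_nil,
        List.mem_cons, List.mem_singleton] at hdm
      rcases hdm with h | h | h
      · exact hd.ne' h
      · exact hcd h.symm
      · simp at h
    · -- c off the path: extend the path, contradicting maximality
      have hext : (SimpleGraph.Walk.cons hac.symm (SimpleGraph.Walk.cons hd q)).IsPath :=
        hp.cons hcs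
      have : (SimpleGraph.Walk.cons hac.symm (SimpleGraph.Walk.cons hd q)).length ∈ S :=
        ⟨c, _, _, hext, rfl⟩
      have := hmax _ this
      simp [SimpleGraph.Walk.length_cons] at this
end

section
/- Let f : ℝ² → ℝ be f(x,y) = c₁ x + c₂ y with c₁ ≤ 0 and c₂ > 0, and let 𝒫 = {P(θ) : θ ∈ [θ̲,θ̄]} be the two-bus flow arc with −arctan(b/g) < θ̲ ≤ θ̄ < arctan(b/g). Then the unique minimizer of f over conv(𝒫) is P(θ̄), the endpoint of the arc maximizing the first coordinate (the 'lower-right corner'). -/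
open Real

theorem lower_right_corner_minimizes
    (g b V1 V2 θlo θhi c1 c2 : ℝ) (hg : 0 < g) (hb : 0 < b)
    (hV1 : 0 < V1) (hV2 : 0 < V2)
    (hlo : -Real.arctan (b / g) < θlo) (hle : θlo ≤ θhi)
    (hhi : θhi < Real.arctan (b / g))
    (hc1 : c1 ≤ 0) (hc2 : 0 < c2)
    (P : ℝ → ℝ × ℝ)
    (hP : ∀ θ, P θ = (V1 ^ 2 * g + V1 * V2 * (b * Real.sin θ - g * Real.cos θ),
                      V2 ^ 2 * g - V1 * V2 * (b * Real.sin θ + g * Real.cos θ))) :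
    P θhi ∈ convexHull ℝ (P '' Set.Icc θlo θhi) ∧
    ∀ x ∈ convexHull ℝ (P '' Set.Icc θlo θhi), x ≠ P θhi →
      c1 * (P θhi).1 + c2 * (P θhi).2 < c1 * x.1 + c2 * x.2 := by
  set A := Real.arctan (b / g) with hA
  have hApi : A < π / 2 := Real.arctan_lt_pi_div_two _
  have hAtan : Real.tan A = b / g := Real.tan_arctan _
  set F : ℝ → ℝ := fun θ =>
    c1 * (V1 ^ 2 * g + V1 * V2 * (b * Real.sin θ - g * Real.cos θ)) +
    c2 * (V2 ^ 2 * g - V1 * V2 * (b * Real.sin θ + g * Real.cos θ)) with hFdef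
  have hFP : ∀ θ, c1 * (P θ).1 + c2 * (P θ).2 = F θ := by
    intro θ; rw [hP θ]
  have hd : ∀ θ : ℝ, HasDerivAt F
      (V1 * V2 * (c1 * (b * Real.cos θ + g * Real.sin θ)
        - c2 * (b * Real.cos θ - g * Real.sin θ))) θ := by
    intro θ
    have hs := Real.hasDerivAt_sin θ
    have hc := Real.hasDerivAt_cos θ
    have h1 : HasDerivAt (fun t : ℝ => c1 * (V1 ^ 2 * g + V1 * V2 * (b * Real.sin t - g * Real.cos t)))
        (c1 * (V1 * V2 * (b * Real.cos θ - g * (-Real.sin θ)))) θ :=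
      ((((hs.const_mul b).sub (hc.const_mul g)).const_mul (V1 * V2)).const_add (V1 ^ 2 * g)).const_mul c1
    have h2 : HasDerivAt (fun t : ℝ => c2 * (V2 ^ 2 * g - V1 * V2 * (b * Real.sin t + g * Real.cos t)))
        (c2 * (0 - V1 * V2 * (b * Real.cos θ + g * (-Real.sin θ)))) θ :=
      ((hasDerivAt_const θ (V2 ^ 2 * g)).sub
        (((hs.const_mul b).add (hc.const_mul g)).const_mul (V1 * V2))).const_mul c2
    have := h1.add h2
    exact this.congr_deriv (by ring)
  have hcont : ContinuousOn F (Set.Icc θlo θhi) :=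
    (fun x _ => ((hd x).differentiableAt).continuousAt.continuousWithinAt)
  have hanti : StrictAntiOn F (Set.Icc θlo θhi) := by
    apply strictAntiOn_of_deriv_neg (convex_Icc _ _) hcont
    intro θ hθ
    rw [interior_Icc] at hθ
    have hθA : -A < θ := lt_of_lt_of_le hlo hθ.1.le
    have hθA' : θ < A := lt_of_le_of_lt hθ.2.le hhi
    have hθmem : θ ∈ Set.Ioo (-(π/2)) (π/2) := by constructor <;> linarith
    have hcos : 0 < Real.cos θ := Real.cos_pos_of_mem_Ioo hθmem
    have hAmem : A ∈ Set.Ioo (-(π/2)) (π/2) := by constructor <;> linarith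
    have hAmem' : -A ∈ Set.Ioo (-(π/2)) (π/2) := by constructor <;> linarith
    have ht1 : Real.tan θ < b / g := by
      have := Real.strictMonoOn_tan hθmem hAmem hθA'
      rwa [hAtan] at this
    have ht2 : -b / g < Real.tan θ := by
      have := Real.strictMonoOn_tan hAmem' hθmem hθA
      rw [Real.tan_neg, hAtan] at this
      rw [neg_div]
      exact this
    rw [Real.tan_eq_sin_div_cos] at ht1 ht2
    have hbc : Real.sin θ * g < b * Real.cos θ := by
      rw [div_lt_div_iff₀ hcos hg] at ht1; linarith
    have hbc2 : -b * Real.cos θ < Real.sin θ * g := by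
      rw [div_lt_div_iff₀ hg hcos] at ht2; linarith
    rw [(hd θ).deriv]
    have hVV : 0 < V1 * V2 := mul_pos hV1 hV2
    nlinarith [mul_nonpos_of_nonpos_of_nonneg hc1 (by nlinarith : (0:ℝ) ≤ b * Real.cos θ + g * Real.sin θ),
      mul_pos hc2 (by nlinarith : (0:ℝ) < b * Real.cos θ - g * Real.sin θ)]
  set m : ℝ := F θhi with hm
  set L : ℝ × ℝ → ℝ := fun x => c1 * x.1 + c2 * x.2 with hL
  set S : Set (ℝ × ℝ) := {x | m < L x} ∪ {P θhi} with hS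
  have hLPhi : L (P θhi) = m := hFP θhi
  have key : ∀ z ∈ S, m ≤ L z := by
    rintro z (hz | hz)
    · exact (le_of_lt hz)
    · rw [Set.mem_singleton_iff] at hz; subst hz; rw [hLPhi]
  have hSconv : Convex ℝ S := by
    intro x hx y hy a bb ha hb hab
    by_cases hxy : a • x + bb • y = P θhi
    · right; rw [Set.mem_singleton_iff]; exact hxy
    · left
      show m < L (a • x + bb • y)
      have hLc : L (a • x + bb • y) = a * L x + bb * L y := by
        simp only [hL, Prod.fst_add, Prod.snd_add, Prod.smul_fst, Prod.smul_snd, smul_eq_mul]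
        ring
      rw [hLc]
      have hx' := key x hx
      have hy' := key y hy
      have hmm : a * m + bb * m = m := by rw [← add_mul, hab, one_mul]
      rcases ha.lt_or_eq with ha' | ha'
      · rcases hb.lt_or_eq with hb' | hb'
        · -- both positive: need one strict value; x,y may equal P θhi
          rcases hx with hxS | hxS
          · have hlt : m < L x := hxS
            have h1 := mul_lt_mul_of_pos_left hlt ha'
            have h2 := mul_le_mul_of_nonneg_left hy' hb
            linarith
          · rcases hy with hyS | hyS
            · have hlt : m < L y := hyS
              have h1 := mul_lt_mul_of_pos_left hlt hb'
              have h2 := mul_le_mul_of_nonneg_left hx' ha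
              linarith
            · rw [Set.mem_singleton_iff] at hxS hyS
              exfalso; apply hxy
              rw [hxS, hyS, ← add_smul, hab, one_smul]
        · -- bb = 0, a = 1
          have ha1 : a = 1 := by linarith
          have hcx : a • x + bb • y = x := by rw [ha1, ← hb', one_smul, zero_smul, add_zero]
          rcases hx with hxS | hxS
          · have hlt : m < L x := hxS
            rw [ha1, ← hb']
            simpa using hlt
          · exfalso; apply hxy
            rw [Set.mem_singleton_iff] at hxS
            rw [hcx, hxS]
      · -- a = 0, bb = 1
        have hb1 : bb = 1 := by linarith
        have hcomb : a • x + bb • y = y := by rw [hb1, ← ha', one_smul, zero_smul, zero_add]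
        rcases hy with hyS | hyS
        · have hlt : m < L y := hyS
          rw [hb1, ← ha']
          simpa using hlt
        · exfalso; apply hxy
          rw [Set.mem_singleton_iff] at hyS
          rw [hcomb, hyS]
  have harc : P '' Set.Icc θlo θhi ⊆ S := by
    rintro _ ⟨θ, hθ, rfl⟩
    rcases eq_or_lt_of_le hθ.2 with h | h
    · right; rw [Set.mem_singleton_iff, h]
    · left
      show m < L (P θ)
      have : F θhi < F θ := hanti hθ ⟨hle, le_rfl⟩ h
      have hLθ : L (P θ) = F θ := hFP θ
      rw [hLθ]; exact this
  have hsub := convexHull_min harc hSconv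
  constructor
  · exact subset_convexHull ℝ _ ⟨θhi, ⟨hle, le_rfl⟩, rfl⟩
  · intro x hx hne
    rcases hsub hx with h | h
    · have hmx : m < L x := h
      calc c1 * (P θhi).1 + c2 * (P θhi).2 = m := hFP θhi
        _ < L x := hmx
        _ = c1 * x.1 + c2 * x.2 := rfl
    · rw [Set.mem_singleton_iff] at h
      exact absurd h hne
end

section
/- Let g,b > 0 with b/g ≥ 1 (so arctan(b/g) ≥ π/4). Then for any θ with |θ| < π/4, the point P(θ) on the two-bus flow arc lies on the Pareto front of the full ellipse E = {P(θ') : θ' ∈ [0,2π)}: no point of E dominates P(θ) componentwise. -/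
open Real

set_option maxHeartbeats 1000000

theorem practical_angle_implies_pareto_on_ellipse
    (g b V1 V2 : ℝ) (hg : 0 < g) (hb : 0 < b) (hbg : 1 ≤ b / g)
    (hV1 : 0 < V1) (hV2 : 0 < V2)
    (P : ℝ → ℝ × ℝ)
    (hP : ∀ θ, P θ = (V1 ^ 2 * g + V1 * V2 * (b * Real.sin θ - g * Real.cos θ),
                      V2 ^ 2 * g - V1 * V2 * (b * Real.sin θ + g * Real.cos θ)))
    (θ : ℝ) (hθ : |θ| < π / 4) :
    ∀ θ' : ℝ, ¬ (P θ' ≤ P θ ∧ P θ' ≠ P θ) := by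
  intro θ' ⟨hle, hne⟩
  have hV : 0 < V1 * V2 := mul_pos hV1 hV2
  have hgb : g ≤ b := by
    have := (one_le_div hg).mp hbg
    linarith
  rw [hP θ', hP θ, Prod.mk_le_mk] at hle
  obtain ⟨h1, h2⟩ := hle
  set s := Real.sin θ with hs_def
  set c := Real.cos θ with hc_def
  set s' := Real.sin θ' with hs'_def
  set c' := Real.cos θ' with hc'_def
  have hθ1 := abs_lt.mp hθ
  have hpi : (0:ℝ) < π := Real.pi_pos
  have hpy : s ^ 2 + c ^ 2 = 1 := Real.sin_sq_add_cos_sq θ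
  have hpy' : s' ^ 2 + c' ^ 2 = 1 := Real.sin_sq_add_cos_sq θ'
  have hc0 : 0 < c := Real.cos_pos_of_mem_Ioo ⟨by linarith, by linarith⟩
  have h2θ : 0 < Real.cos (2 * θ) :=
    Real.cos_pos_of_mem_Ioo ⟨by linarith, by linarith⟩
  have hc2 : s ^ 2 < c ^ 2 := by
    have := Real.cos_two_mul θ
    nlinarith
  -- reduce componentwise inequalities
  have hA : b * (s' - s) ≤ g * (c' - c) := by nlinarith [h1]
  have hB : -(g * (c' - c)) ≤ b * (s' - s) := by nlinarith [h2]
  have hcc : c ≤ c' := by nlinarith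
  have hprod : 0 ≤ (g * (c' - c) - b * (s' - s)) * (g * (c' - c) + b * (s' - s)) :=
    mul_nonneg (by linarith) (by linarith)
  have hb2 : b ^ 2 * (s' - s) ^ 2 ≤ g ^ 2 * (c' - c) ^ 2 := by nlinarith [hprod]
  have hsq : (s' - s) ^ 2 ≤ (c' - c) ^ 2 := by
    nlinarith [mul_nonneg (mul_nonneg (sub_nonneg.mpr hgb) (by linarith : (0:ℝ) ≤ g + b))
      (sq_nonneg (c' - c)), mul_pos hb hb]
  have hs'2 : s' ^ 2 ≤ s ^ 2 := by nlinarith [mul_nonneg (sub_nonneg.mpr hcc) (by linarith : (0:ℝ) ≤ c' + c)]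
  have hid : (c' - c) * (c' + c) = (s - s') * (s + s') := by linear_combination hpy' - hpy
  have hceq : c' = c := by
    by_contra h
    have hd : 0 < c' - c := sub_pos.mpr (lt_of_le_of_ne hcc (fun he => h he.symm))
    nlinarith [mul_nonneg (sub_nonneg.mpr hsq) (sq_nonneg (s + s')),
      sq_nonneg (s - s'), mul_pos hd hd, mul_pos hd hc0,
      mul_nonneg hd.le (by linarith : (0:ℝ) ≤ c' + 3 * c),
      mul_pos (mul_pos hd hd) (by nlinarith : (0:ℝ) < (c + c') ^ 2 - 4 * s ^ 2)]
  have hseq : s' = s := by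
    rw [hceq] at hA hB
    nlinarith
  exact hne (by
    rw [hP θ', hP θ, ← hs'_def, ← hc'_def, ← hs_def, ← hc_def, hseq, hceq])
end
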